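/- Let F_2 be the free group on generators a, b. If f is an automorphism of F_2 with f(a) = a, then there exist integers n, m and ε ∈ {±1} such that f(b) = a^n b^ε a^m. -/

import Mathlib

open FreeGroup List

variable {α : Type*} [DecidableEq α]
set_option linter.unusedSectionVars false

/-- a word is reduced -/
def Rd (L : List (α × Bool)) : Prop :=
  List.Chain' (fun x y => ¬(x.1 = y.1 ∧ x.2 = !y.2)) L

theorem rd_reduce_eq {L : List (α × Bool)} (h : Rd L) : FreeGroup.reduce L = L := by
  induction L with
  | nil => rfl
  | cons x L ih =>
    have hL : Rd L := h.tail
    rw [reduce.cons, ih hL]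
    cases L with
    | nil => rfl
    | cons y t =>
      have : ¬(x.1 = y.1 ∧ x.2 = !y.2) := List.isChain_cons_cons.mp h |>.1
      simp [this]

theorem rd_reduce (L : List (α × Bool)) : Rd (FreeGroup.reduce L) := by
  induction L with
  | nil => exact List.isChain_nil
  | cons x L ih =>
    rw [reduce.cons]
    rcases hr : FreeGroup.reduce L with _ | ⟨y, t⟩
    · exact List.isChain_singleton x
    · rw [hr] at ih
      by_cases hc : x.1 = y.1 ∧ x.2 = !y.2
      · simp only [hc, if_true]
        exact ih.tail
      · simp only [hc, if_false]
        exact List.isChain_cons_cons.mpr ⟨hc, ih⟩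

theorem rd_toWord (x : FreeGroup α) : Rd x.toWord := by
  rw [← FreeGroup.reduce_toWord]; exact rd_reduce _

theorem toWord_mul_eq {x y : FreeGroup α}
    (h : ∀ u ∈ x.toWord.getLast?, ∀ v ∈ y.toWord.head?, ¬(u.1 = v.1 ∧ u.2 = !v.2)) :
    (x * y).toWord = x.toWord ++ y.toWord := by
  conv_lhs => rw [← FreeGroup.mk_toWord (x := x), ← FreeGroup.mk_toWord (x := y)]
  rw [FreeGroup.mul_mk, FreeGroup.toWord_mk]
  apply rd_reduce_eq
  exact List.isChain_append.mpr ⟨rd_toWord x, rd_toWord y, h⟩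

theorem invRev_cons (x : α × Bool) (L : List (α × Bool)) :
    FreeGroup.invRev (x :: L) = FreeGroup.invRev L ++ [(x.1, !x.2)] := by
  simp [FreeGroup.invRev]

theorem head?_invRev (L : List (α × Bool)) :
    (FreeGroup.invRev L).head? = L.getLast?.map (fun x => (x.1, !x.2)) := by
  rw [FreeGroup.invRev, List.head?_reverse, List.getLast?_map]

theorem getLast?_invRev (L : List (α × Bool)) :
    (FreeGroup.invRev L).getLast? = L.head?.map (fun x => (x.1, !x.2)) := by
  rw [FreeGroup.invRev, ← List.head?_reverse, List.reverse_reverse, List.head?_map]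

theorem rd_infix {L M : List (α × Bool)} (h : Rd L) (hM : M <:+: L) : Rd M :=
  List.IsChain.infix h hM

/-- cyclic decomposition of a reduced word -/
theorem cyc_dec : ∀ (N : ℕ) (L : List (α × Bool)), L.length ≤ N → Rd L → L ≠ [] →
    ∃ P C, L = P ++ C ++ FreeGroup.invRev P ∧ C ≠ [] ∧
      (∀ u ∈ C.getLast?, ∀ v ∈ C.head?, ¬(u.1 = v.1 ∧ u.2 = !v.2)) := by
  intro N
  induction N with
  | zero => intro L hL _ hne; interval_cases hl : L.length <;> simp_all
  | succ N ih =>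
    intro L hL hrd hne
    rcases L with _ | ⟨y, M⟩
    · exact absurd rfl hne
    rcases List.eq_nil_or_concat M with rfl | ⟨M', z, rfl⟩
    · refine ⟨[], [y], by simp [FreeGroup.invRev], by simp, ?_⟩
      simp only [List.getLast?_singleton, List.head?_cons, Option.mem_some_iff]
      rintro u rfl v rfl
      simp
    · rw [List.concat_eq_append] at *
      by_cases hc : (z.1 = y.1 ∧ z.2 = !y.2)
      · -- z = inverse of y; strip
        have hM' : M' ≠ [] := by
          rintro rfl
          have := List.isChain_cons_cons.mp (show Rd (y :: ([] ++ [z])) from hrd) |>.1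
          apply this
          obtain ⟨h1, h2⟩ := hc
          exact ⟨h1.symm, by rw [h2, Bool.not_not]⟩
        have hrdM' : Rd M' := rd_infix hrd ⟨[y], [z], by simp⟩
        have hlen : M'.length ≤ N := by
          simp only [List.length_cons, List.length_append, List.length_singleton] at hL
          omega
        obtain ⟨P, C, hPC, hCne, hcyc⟩ := ih M' hlen hrdM' hM'
        refine ⟨y :: P, C, ?_, hCne, hcyc⟩
        rw [_root_.invRev_cons, hPC]
        simp only [List.cons_append, List.append_assoc]
        congr 3
        obtain ⟨h1, h2⟩ := hc
        have : z = (y.1, !y.2) := by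
          cases z; cases y; simp_all
        rw [this]
      · -- L is cyclically reduced
        refine ⟨[], y :: (M' ++ [z]), by simp [FreeGroup.invRev], by simp, ?_⟩
        intro u hu v hv
        simp only [List.head?_cons, Option.mem_some_iff] at hv
        subst hv
        have : (y :: (M' ++ [z])).getLast? = some z := by
          rw [show y :: (M' ++ [z]) = (y :: M') ++ [z] by simp, List.getLast?_concat]
        rw [this, Option.mem_some_iff] at hu
        subst hu
        exact hc

section PowFacts

theorem join_facts {C : List (α × Bool)} (hC : C ≠ []) (hrdC : Rd C)
    (hcyc : ∀ u ∈ C.getLast?, ∀ v ∈ C.head?, ¬(u.1 = v.1 ∧ u.2 = !v.2)) :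
    ∀ n : ℕ, Rd (List.replicate n C).flatten ∧
      (1 ≤ n → (List.replicate n C).flatten ≠ [] ∧
        (List.replicate n C).flatten.head? = C.head? ∧
        (List.replicate n C).flatten.getLast? = C.getLast?) := by
  intro n
  induction n with
  | zero => exact ⟨List.isChain_nil, fun h => by omega⟩
  | succ n ih =>
    have hrep : (List.replicate (n+1) C).flatten = C ++ (List.replicate n C).flatten := by
      simp [List.replicate_succ]
    rcases Nat.eq_zero_or_pos n with rfl | hn
    · refine ⟨?_, fun _ => ⟨?_, ?_, ?_⟩⟩ <;>
        simp only [hrep, List.replicate_zero, List.flatten_nil, List.append_nil] <;>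
        first | exact hrdC | exact hC | rfl
    · obtain ⟨ih1, ih2⟩ := ih
      obtain ⟨ihne, ihh, ihl⟩ := ih2 hn
      constructor
      · rw [hrep]
        refine List.isChain_append.mpr ⟨hrdC, ih1, ?_⟩
        intro u hu v hv
        rw [ihh] at hv
        exact hcyc u hu v hv
      · intro _
        refine ⟨by rw [hrep]; simp [hC], ?_, ?_⟩
        · rw [hrep, List.head?_append_of_ne_nil _ hC]
        · rw [hrep, List.getLast?_append_of_ne_nil _ ihne, ihl]

theorem join_length {C : List (α × Bool)} (n : ℕ) :
    (List.replicate n C).flatten.length = n * C.length := by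
  simp [List.length_flatten]

theorem mk_pow_join {C : List (α × Bool)} (n : ℕ) :
    (FreeGroup.mk C) ^ n = FreeGroup.mk (List.replicate n C).flatten := by
  induction n with
  | zero =>
    simp only [pow_zero, List.replicate_zero, List.flatten_nil]
    rfl
  | succ n ih =>
    rw [pow_succ', ih, FreeGroup.mul_mk,
      show (List.replicate (n+1) C).flatten = C ++ (List.replicate n C).flatten by
        simp [List.replicate_succ]]

theorem pow_mk_toWord {W P C : List (α × Bool)} (hW : Rd W)
    (hPC : W = P ++ C ++ FreeGroup.invRev P) (hC : C ≠ [])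
    (hcyc : ∀ u ∈ C.getLast?, ∀ v ∈ C.head?, ¬(u.1 = v.1 ∧ u.2 = !v.2))
    (n : ℕ) (hn : 1 ≤ n) :
    ((FreeGroup.mk W) ^ n).toWord = P ++ (List.replicate n C).flatten ++ FreeGroup.invRev P := by
  have hW' : Rd ((P ++ C) ++ FreeGroup.invRev P) := by rw [← hPC]; exact hW
  obtain ⟨hPC', hRdInv, jlast⟩ := List.isChain_append.mp hW'
  obtain ⟨hRdP, hRdC, jPC⟩ := List.isChain_append.mp hPC'
  have hJrd := (join_facts hC hRdC hcyc n).1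
  obtain ⟨hJne', hJh, hJl⟩ := (join_facts hC hRdC hcyc n).2 hn
  have halg : (FreeGroup.mk W : FreeGroup α) =
      FreeGroup.mk P * FreeGroup.mk C * (FreeGroup.mk P)⁻¹ := by
    rw [FreeGroup.inv_mk, FreeGroup.mul_mk, FreeGroup.mul_mk, hPC]
  rw [halg, conj_pow, mk_pow_join, FreeGroup.inv_mk, FreeGroup.mul_mk, FreeGroup.mul_mk,
    FreeGroup.toWord_mk]
  apply rd_reduce_eq
  refine List.isChain_append.mpr ⟨List.isChain_append.mpr ⟨hRdP, hJrd, ?_⟩, hRdInv, ?_⟩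
  · intro u hu v hv
    rw [hJh] at hv
    exact jPC u hu v hv
  · intro u hu v hv
    rw [List.getLast?_append_of_ne_nil _ hJne', hJl] at hu
    apply jlast u ?_ v hv
    rcases List.eq_nil_or_concat C with rfl | ⟨C', c, rfl⟩
    · exact absurd rfl hC
    · rw [List.concat_eq_append] at *
      rw [List.getLast?_concat] at hu
      rw [← List.append_assoc, List.getLast?_concat]
      exact hu

end PowFacts

theorem pow_facts (x : FreeGroup α) (hx : x ≠ 1) (n : ℕ) (hn : 1 ≤ n) :
    x.toWord.length ≤ (x ^ n).toWord.length ∧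
      (x ^ n).toWord.head? = x.toWord.head? ∧
      (x ^ n).toWord.getLast? = x.toWord.getLast? := by
  obtain ⟨P, C, hPC, hC, hcyc⟩ := cyc_dec x.toWord.length x.toWord le_rfl (rd_toWord x)
    (fun h => hx (FreeGroup.toWord_eq_nil_iff.mp h))
  have hrdC : Rd C := rd_infix (rd_toWord x) ⟨P, FreeGroup.invRev P, hPC.symm⟩
  have htw := pow_mk_toWord (rd_toWord x) hPC hC hcyc n hn
  rw [FreeGroup.mk_toWord] at htw
  obtain ⟨hJne, hJh, hJl⟩ := (join_facts hC hrdC hcyc n).2 hn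
  refine ⟨?_, ?_, ?_⟩
  · rw [htw]
    conv_lhs => rw [hPC]
    simp only [List.length_append, join_length, invRev_length]
    have h1 : C.length ≤ n * C.length := Nat.le_mul_of_pos_left _ hn
    omega
  · rw [htw]
    conv_rhs => rw [hPC]
    rcases P with _ | ⟨p, P'⟩
    · simpa using hJh
    · rw [List.head?_append_of_ne_nil _ (by simp), List.head?_append_of_ne_nil _ (by simp),
        List.head?_append_of_ne_nil _ (by simp), List.head?_append_of_ne_nil _ (by simp)]
  · rw [htw]
    conv_rhs => rw [hPC]
    rcases List.eq_nil_or_concat P with rfl | ⟨P', p, hP⟩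
    · simpa [FreeGroup.invRev] using hJl
    · have hinv : FreeGroup.invRev P ≠ [] := by
        intro h
        have := FreeGroup.invRev_length (L₁ := P)
        rw [h, hP] at this
        simp at this
      rw [List.getLast?_append_of_ne_nil _ hinv, List.getLast?_append_of_ne_nil _ hinv]

theorem zpow_facts (x : FreeGroup α) (hx : x ≠ 1) (l : ℤ) (hl : l ≠ 0) :
    x.toWord.length ≤ (x ^ l).toWord.length ∧
      (0 < l → (x ^ l).toWord.head? = x.toWord.head? ∧
        (x ^ l).toWord.getLast? = x.toWord.getLast?) ∧
      (l < 0 → (x ^ l).toWord.head? = x.toWord.getLast?.map (fun u => (u.1, !u.2)) ∧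
        (x ^ l).toWord.getLast? = x.toWord.head?.map (fun u => (u.1, !u.2))) := by
  rcases lt_or_gt_of_ne hl with hneg | hpos
  · have hrw : x ^ l = (x ^ ((-l).toNat))⁻¹ := by
      rw [← zpow_natCast, ← zpow_neg]; congr 1; omega
    obtain ⟨h1, h2, h3⟩ := pow_facts x hx ((-l).toNat) (by omega)
    rw [hrw, FreeGroup.toWord_inv]
    refine ⟨?_, fun h => by omega, fun _ => ?_⟩
    · rw [FreeGroup.invRev_length]; exact h1
    · rw [head?_invRev, getLast?_invRev, h2, h3]
      exact ⟨rfl, rfl⟩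
  · have hrw : x ^ l = x ^ (l.toNat) := by
      rw [← zpow_natCast]; congr 1; omega
    obtain ⟨h1, h2, h3⟩ := pow_facts x hx l.toNat (by omega)
    rw [hrw]
    exact ⟨h1, fun _ => ⟨h2, h3⟩, fun h => by omega⟩

/-! ### Specific facts -/

theorem toWord_zpow_of (a : α) (k : ℤ) :
    ∃ s, ((FreeGroup.of a) ^ k).toWord = List.replicate k.natAbs (a, s) := by
  rcases k with n | n
  · exact ⟨true, by rw [Int.ofNat_eq_coe, zpow_natCast, FreeGroup.toWord_of_pow]; rfl⟩
  · refine ⟨false, ?_⟩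
    rw [zpow_negSucc, FreeGroup.toWord_inv, FreeGroup.toWord_of_pow]
    simp [FreeGroup.invRev]

abbrev F2 := FreeGroup (Fin 2)

lemma fin2 (i : Fin 2) : i = 0 ∨ i = 1 := by fin_cases i <;> simp

def sgn (s : Bool) : ℤ := if s then 1 else -1

lemma sgn_true : sgn true = 1 := rfl
lemma sgn_false : sgn false = -1 := rfl

lemma mk_single_true (i : Fin 2) : FreeGroup.mk [(i, true)] = FreeGroup.of i := rfl

lemma mk_single_false (i : Fin 2) : FreeGroup.mk [(i, false)] = (FreeGroup.of i)⁻¹ := by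
  have h : FreeGroup.invRev [(i, true)] = [(i, false)] := by simp [FreeGroup.invRev]
  rw [← mk_single_true i, FreeGroup.inv_mk, h]

lemma zpow_sgn (i : Fin 2) (s : Bool) :
    (FreeGroup.of i : F2) ^ sgn s = FreeGroup.mk [(i, s)] := by
  cases s
  · rw [sgn_false, zpow_neg, zpow_one, mk_single_false]
  · rw [sgn_true, zpow_one, mk_single_true]

theorem strip_left : ∀ (N : ℕ) (w : F2), w.toWord.length ≤ N →
    ∃ (n : ℤ) (w' : F2), w = (FreeGroup.of 0) ^ n * w' ∧
      (w' = 1 ∨ (w'.toWord ≠ [] ∧ ∀ u ∈ w'.toWord.head?, u.1 = 1)) := by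
  intro N
  induction N with
  | zero =>
    intro w hw
    refine ⟨0, 1, ?_, Or.inl rfl⟩
    have : w.toWord = [] := List.eq_nil_of_length_eq_zero (by omega)
    rw [FreeGroup.toWord_eq_nil_iff.mp this]
    simp
  | succ N ih =>
    intro w hw
    rcases hL : w.toWord with _ | ⟨x, t⟩
    · refine ⟨0, 1, ?_, Or.inl rfl⟩
      rw [FreeGroup.toWord_eq_nil_iff.mp hL]; simp
    rcases fin2 x.1 with hx | hx
    · -- strip the leading a-letter
      have hxx : x = (0, x.2) := by rw [← hx]
      have hw1 : w = (FreeGroup.of 0) ^ (sgn x.2) * FreeGroup.mk t := by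
        rw [zpow_sgn, FreeGroup.mul_mk, ← hxx, List.singleton_append, ← hL,
          FreeGroup.mk_toWord]
      have ht : (FreeGroup.mk t : F2).toWord = t := by
        rw [FreeGroup.toWord_mk]
        apply rd_reduce_eq
        have := rd_toWord w
        rw [hL] at this
        exact this.tail
      have hlen : (FreeGroup.mk t : F2).toWord.length ≤ N := by
        rw [ht]
        have : w.toWord.length = t.length + 1 := by rw [hL]; simp
        omega
      obtain ⟨n, w', h1, h2⟩ := ih (FreeGroup.mk t) hlen
      exact ⟨sgn x.2 + n, w', by rw [hw1, h1, zpow_add, mul_assoc], h2⟩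
    · refine ⟨0, w, by simp, Or.inr ⟨by rw [hL]; simp, ?_⟩⟩
      intro u hu
      rw [hL] at hu
      simp only [List.head?_cons, Option.mem_some_iff] at hu
      exact hu ▸ hx

theorem strip_right : ∀ (N : ℕ) (w : F2), w.toWord.length ≤ N →
    ∃ (m : ℤ) (w' : F2), w = w' * (FreeGroup.of 0) ^ m ∧
      (w' = 1 ∨ (w'.toWord ≠ [] ∧ (∀ u ∈ w'.toWord.getLast?, u.1 = 1) ∧
        w'.toWord.head? = w.toWord.head?)) := by
  intro N
  induction N with
  | zero =>
    intro w hw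
    refine ⟨0, 1, ?_, Or.inl rfl⟩
    have : w.toWord = [] := List.eq_nil_of_length_eq_zero (by omega)
    rw [FreeGroup.toWord_eq_nil_iff.mp this]
    simp
  | succ N ih =>
    intro w hw
    rcases List.eq_nil_or_concat w.toWord with hL0 | ⟨t, x, hL⟩
    · refine ⟨0, 1, ?_, Or.inl rfl⟩
      rw [FreeGroup.toWord_eq_nil_iff.mp hL0]; simp
    rcases fin2 x.1 with hx | hx
    · -- strip the trailing a-letter
      have hxx : x = (0, x.2) := by rw [← hx]
      rw [List.concat_eq_append] at hL
      have hw1 : w = FreeGroup.mk t * (FreeGroup.of 0) ^ (sgn x.2) := by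
        rw [zpow_sgn, FreeGroup.mul_mk, ← hxx, ← hL, FreeGroup.mk_toWord]
      have ht : (FreeGroup.mk t : F2).toWord = t := by
        rw [FreeGroup.toWord_mk]
        apply rd_reduce_eq
        have := rd_toWord w
        rw [hL] at this
        exact this.prefix ⟨[x], rfl⟩
      have hlen : (FreeGroup.mk t : F2).toWord.length ≤ N := by
        rw [ht]
        have : w.toWord.length = t.length + 1 := by rw [hL]; simp
        omega
      obtain ⟨m, w', h1, h2⟩ := ih (FreeGroup.mk t) hlen
      refine ⟨m + sgn x.2, w', by rw [hw1, h1, zpow_add, mul_assoc], ?_⟩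
      rcases h2 with h2 | ⟨h2a, h2b, h2c⟩
      · exact Or.inl h2
      · rw [ht] at h2c
        rcases t with _ | ⟨y, t'⟩
        · exact absurd (List.head?_eq_none_iff.mp (by simpa using h2c)) h2a
        · refine Or.inr ⟨h2a, h2b, ?_⟩
          rw [h2c, hL]
          simp
    · refine ⟨0, w, by simp, Or.inr ⟨by rw [hL]; simp, ?_, rfl⟩⟩
      intro u hu
      rw [hL, List.concat_eq_append, List.getLast?_concat, Option.mem_some_iff] at hu
      exact hu ▸ hx

local notation "𝔞" => (FreeGroup.of 0 : F2)
local notation "𝔟" => (FreeGroup.of 1 : F2)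

def Mt (k : ℤ) (s : Bool) : Prop := if s then 0 < k else k < 0

lemma Mt_ne_zero {k : ℤ} {s : Bool} (h : Mt k s) : k ≠ 0 := by
  cases s <;> simp [Mt] at h <;> omega

lemma Mt_sgn (s : Bool) : Mt (sgn s) s := by cases s <;> simp [Mt, sgn]

lemma Mt_add {k : ℤ} {s : Bool} (h : Mt k s) : Mt (sgn s + k) s := by
  cases s <;> simp [Mt, sgn] at * <;> omega

lemma bool_eq {s s' : Bool} (h : ¬(s = !s')) : s = s' := by
  cases s <;> cases s' <;> simp_all

/-- a-letter head or empty -/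
def Cd (d : F2) : Prop := d.toWord = [] ∨ ∃ v, d.toWord.head? = some v ∧ v.1 = 0

theorem no_big (w₀ : F2) (hlen : 2 ≤ w₀.toWord.length)
    (hhead : ∀ u ∈ w₀.toWord.head?, u.1 = 1)
    (hlast : ∀ u ∈ w₀.toWord.getLast?, u.1 = 1)
    (z : F2) (hz : FreeGroup.lift ![𝔞, w₀] z = 𝔟) : False := by
  set g := FreeGroup.lift ![𝔞, w₀] with hg
  have hw1 : w₀ ≠ 1 := by
    intro h
    rw [h, FreeGroup.toWord_one] at hlen
    simp at hlen
  -- facts about powers of w₀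
  have lastB : ∀ l : ℤ, l ≠ 0 → ∀ u ∈ (w₀ ^ l).toWord.getLast?, u.1 = 1 := by
    intro l hl u hu
    obtain ⟨_, hpos, hneg⟩ := zpow_facts w₀ hw1 l hl
    rcases lt_or_gt_of_ne hl with h | h
    · rw [(hneg h).2, Option.mem_def, Option.map_eq_some_iff] at hu
      obtain ⟨v, hv1, hv2⟩ := hu
      rw [← hv2]
      exact hhead v hv1
    · rw [(hpos h).2] at hu
      exact hlast u hu
  have headB : ∀ l : ℤ, l ≠ 0 → ∀ u ∈ (w₀ ^ l).toWord.head?, u.1 = 1 := by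
    intro l hl u hu
    obtain ⟨_, hpos, hneg⟩ := zpow_facts w₀ hw1 l hl
    rcases lt_or_gt_of_ne hl with h | h
    · rw [(hneg h).1, Option.mem_def, Option.map_eq_some_iff] at hu
      obtain ⟨v, hv1, hv2⟩ := hu
      rw [← hv2]
      exact hlast v hv1
    · rw [(hpos h).1] at hu
      exact hhead u hu
  have lenB : ∀ l : ℤ, l ≠ 0 → 2 ≤ (w₀ ^ l).toWord.length := by
    intro l hl
    exact le_trans hlen (zpow_facts w₀ hw1 l hl).1
  have neB : ∀ l : ℤ, l ≠ 0 → (w₀ ^ l).toWord ≠ [] := by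
    intro l hl h
    have := lenB l hl
    rw [h] at this
    simp at this
  -- words of powers of the generator
  have repl_head : ∀ k : ℤ, k ≠ 0 → ∃ s, ((𝔞 : F2) ^ k).toWord.head? = some (0, s) ∧
      ((𝔞 : F2) ^ k).toWord ≠ [] := by
    intro k hk
    obtain ⟨s, hs⟩ := toWord_zpow_of (0 : Fin 2) k
    refine ⟨s, ?_, ?_⟩ <;> rw [hs] <;>
      rcases hn : k.natAbs with _ | n
    · omega
    · simp [List.replicate_succ]
    · omega
    · simp [List.replicate_succ]
  -- concatenation lemmas
  have hmul : ∀ l : ℤ, l ≠ 0 → ∀ d : F2, Cd d →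
      (w₀ ^ l * d).toWord = (w₀ ^ l).toWord ++ d.toWord := by
    intro l hl d hd
    apply toWord_mul_eq
    intro u hu v hv
    rcases hd with hd | ⟨v0, hv0, hv00⟩
    · rw [hd] at hv; simp at hv
    · rw [Option.mem_def, hv0, Option.some_inj] at hv
      have h1 := lastB l hl u hu
      have h2 : v.1 = 0 := hv ▸ hv00
      intro hcon
      rw [h1, h2] at hcon
      exact absurd hcon.1 (by decide)
  have hmul_head : ∀ l : ℤ, l ≠ 0 → ∀ d : F2, Cd d →
      ∀ u ∈ (w₀ ^ l * d).toWord.head?, u.1 = 1 := by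
    intro l hl d hd u hu
    rw [hmul l hl d hd, List.head?_append_of_ne_nil _ (neB l hl)] at hu
    exact headB l hl u hu
  have hamul : ∀ k : ℤ, ∀ X : F2, (∀ v ∈ X.toWord.head?, v.1 = 1) →
      ((𝔞 : F2) ^ k * X).toWord = ((𝔞 : F2) ^ k).toWord ++ X.toWord := by
    intro k X hX
    apply toWord_mul_eq
    intro u hu v hv
    obtain ⟨s, hs⟩ := toWord_zpow_of (0 : Fin 2) k
    rw [hs] at hu
    have hu' : u = (0, s) :=
      List.eq_of_mem_replicate (List.mem_of_mem_getLast? hu)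
    have h1 := hX v hv
    have hu1 : u.1 = 0 := by rw [hu']
    intro hcon
    rw [hu1, h1] at hcon
    exact absurd hcon.1 (by decide)
  -- the key induction
  have key : ∀ u : List (Fin 2 × Bool), Rd u →
      ((∀ x ∈ u, x.1 = (0 : Fin 2)) ∧ ∃ k : ℤ, g (FreeGroup.mk u) = 𝔞 ^ k)
      ∨ (∃ s t, u = ((1 : Fin 2), s) :: t ∧ ∃ (l : ℤ) (d : F2), Mt l s ∧ Cd d ∧
          g (FreeGroup.mk u) = w₀ ^ l * d)
      ∨ (∃ s t, u = ((0 : Fin 2), s) :: t ∧ ∃ (k l : ℤ) (d : F2), Mt k s ∧ l ≠ 0 ∧ Cd d ∧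
          g (FreeGroup.mk u) = 𝔞 ^ k * (w₀ ^ l * d)) := by
    intro u
    induction u with
    | nil =>
      intro _
      refine Or.inl ⟨by simp, 0, ?_⟩
      have h1 : (FreeGroup.mk [] : F2) = 1 := rfl
      rw [h1, _root_.map_one, zpow_zero]
    | cons x u ih =>
      intro hrd
      have hrdu : Rd u := hrd.tail
      have hgsplit : g (FreeGroup.mk (x :: u)) = g (FreeGroup.mk [x]) * g (FreeGroup.mk u) := by
        rw [← _root_.map_mul, FreeGroup.mul_mk, List.singleton_append]
      obtain ⟨i, s⟩ := x
      rcases fin2 i with rfl | rfl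
      · -- prepending an a-letter
        have hg0 : g (FreeGroup.mk [((0 : Fin 2), s)]) = 𝔞 ^ (sgn s) := by
          rw [← zpow_sgn, map_zpow, hg, FreeGroup.lift_apply_of]
          simp
        rcases ih hrdu with ⟨hall, k, hk⟩ | ⟨s', t, rfl, l, d, hMt, hCd, hgu⟩ |
            ⟨s', t, huEq, k, l, d, hMt, hl, hCd, hgu⟩
        · refine Or.inl ⟨?_, sgn s + k, ?_⟩
          · intro y hy
            rcases List.mem_cons.mp hy with rfl | hy
            · rfl
            · exact hall y hy
          · rw [hgsplit, hg0, hk, ← zpow_add]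
        · exact Or.inr (Or.inr ⟨s, _, rfl, sgn s, l, d, Mt_sgn s, Mt_ne_zero hMt, hCd,
            by rw [hgsplit, hg0, hgu]⟩)
        · subst huEq
          have hss : s = s' := by
            have := (List.isChain_cons_cons.mp hrd).1
            exact bool_eq (fun h => this ⟨rfl, h⟩)
          subst hss
          exact Or.inr (Or.inr ⟨s, _, rfl, sgn s + k, l, d, Mt_add hMt, hl, hCd,
            by rw [hgsplit, hg0, hgu, ← mul_assoc, ← zpow_add]⟩)
      · -- prepending a b-letter
        have hg1 : g (FreeGroup.mk [((1 : Fin 2), s)]) = w₀ ^ (sgn s) := by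
          rw [← zpow_sgn, map_zpow, hg, FreeGroup.lift_apply_of]
          simp
        rcases ih hrdu with ⟨hall, k, hk⟩ | ⟨s', t, huEq, l, d, hMt, hCd, hgu⟩ |
            ⟨s', t, huEq, k, l, d, hMt, hl, hCd, hgu⟩
        · refine Or.inr (Or.inl ⟨s, u, rfl, sgn s, 𝔞 ^ k, Mt_sgn s, ?_, ?_⟩)
          · obtain ⟨s0, hs0⟩ := toWord_zpow_of (0 : Fin 2) k
            rcases hn : k.natAbs with _ | n
            · left; rw [hs0, hn]; rfl
            · right
              exact ⟨(0, s0), by rw [hs0, hn]; simp [List.replicate_succ], rfl⟩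
          · rw [hgsplit, hg1, hk]
        · subst huEq
          have hss : s = s' := by
            have := (List.isChain_cons_cons.mp hrd).1
            exact bool_eq (fun h => this ⟨rfl, h⟩)
          subst hss
          exact Or.inr (Or.inl ⟨s, _, rfl, sgn s + l, d, Mt_add hMt, hCd,
            by rw [hgsplit, hg1, hgu, ← mul_assoc, ← zpow_add]⟩)
        · subst huEq
          have hk := Mt_ne_zero hMt
          refine Or.inr (Or.inl ⟨s, _, rfl, sgn s, 𝔞 ^ k * (w₀ ^ l * d), Mt_sgn s, ?_, ?_⟩)
          · right
            obtain ⟨s0, hs0, hne0⟩ := repl_head k hk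
            refine ⟨(0, s0), ?_, rfl⟩
            rw [hamul k _ (hmul_head l hl d hCd), List.head?_append_of_ne_nil _ hne0]
            exact hs0
          · rw [hgsplit, hg1, hgu]
  -- apply the key induction to the preimage of b
  have hz' : g (FreeGroup.mk z.toWord) = 𝔟 := by rw [FreeGroup.mk_toWord]; exact hz
  rcases key z.toWord (rd_toWord z) with ⟨hall, k, hk⟩ | ⟨s, t, huEq, l, d, hMt, hCd, hgu⟩ |
      ⟨s, t, huEq, k, l, d, hMt, hl, hCd, hgu⟩
  · rw [hz'] at hk
    obtain ⟨s0, hs0⟩ := toWord_zpow_of (0 : Fin 2) k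
    have : (𝔟 : F2).toWord = [((1 : Fin 2), true)] := FreeGroup.toWord_of 1
    rw [hk, hs0] at this
    have : ((1 : Fin 2), true) ∈ List.replicate k.natAbs ((0 : Fin 2), s0) := by
      rw [this]; simp
    have := List.eq_of_mem_replicate this
    simp at this
  · rw [hz'] at hgu
    have h1 : (𝔟 : F2).toWord.length = 1 := by rw [FreeGroup.toWord_of]; rfl
    rw [hgu, hmul l (Mt_ne_zero hMt) d hCd] at h1
    have := lenB l (Mt_ne_zero hMt)
    rw [List.length_append] at h1
    omega
  · rw [hz'] at hgu
    have h1 : (𝔟 : F2).toWord.length = 1 := by rw [FreeGroup.toWord_of]; rfl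
    rw [hgu, hamul k _ (hmul_head l hl d hCd), hmul l hl d hCd] at h1
    have := lenB l hl
    rw [List.length_append, List.length_append] at h1
    omega

lemma b_ne_apow (n : ℤ) : (𝔟 : F2) ≠ 𝔞 ^ n := by
  intro h
  obtain ⟨s, hs⟩ := toWord_zpow_of (0 : Fin 2) n
  have h1 : (𝔟 : F2).toWord = [((1 : Fin 2), true)] := FreeGroup.toWord_of 1
  rw [h, hs] at h1
  have h2 : ((1 : Fin 2), true) ∈ List.replicate n.natAbs ((0 : Fin 2), s) := by
    rw [h1]; simp
  have := List.eq_of_mem_replicate h2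
  simp at this

/-- If an automorphism of the free group `F₂ = ⟨a, b⟩` fixes `a`, then
`f(b) = aⁿ b^ε aᵐ` for some integers `n, m` and `ε ∈ {±1}`. -/
theorem stmt_1 (f : MulAut (FreeGroup (Fin 2)))
    (hf : f (FreeGroup.of 0) = FreeGroup.of 0) :
    ∃ (n m ε : ℤ), (ε = 1 ∨ ε = -1) ∧
      f (FreeGroup.of 1) =
        FreeGroup.of 0 ^ n * FreeGroup.of (1 : Fin 2) ^ ε * FreeGroup.of 0 ^ m := by
  set w : F2 := f (FreeGroup.of 1) with hwdef
  have hfsymm : f.symm 𝔞 = 𝔞 := by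
    conv_lhs => rw [← hf]
    exact f.symm_apply_apply _
  obtain ⟨n, u, hwu, hu⟩ := strip_left w.toWord.length w le_rfl
  rcases hu with rfl | ⟨hne, hh⟩
  · -- w is a power of a : impossible
    exfalso
    apply b_ne_apow n
    have : f.symm w = f.symm (𝔞 ^ n * 1) := by rw [← hwu]
    rw [mul_one, map_zpow, hfsymm, hwdef, f.symm_apply_apply] at this
    exact this
  obtain ⟨m, w₀, huw, hu2⟩ := strip_right u.toWord.length u le_rfl
  rcases hu2 with rfl | ⟨hne2, hlast2, hheadeq⟩
  · -- u is a power of a : contradicts that its head is a b-letter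
    exfalso
    rw [one_mul] at huw
    obtain ⟨s0, hs0⟩ := toWord_zpow_of (0 : Fin 2) m
    rw [huw, hs0] at hne hh
    rcases hn : m.natAbs with _ | n'
    · rw [hn] at hne; simp at hne
    · rw [hn] at hh
      have := hh ((0 : Fin 2), s0) (by simp [List.replicate_succ])
      simp at this
  have hhead2 : ∀ x ∈ w₀.toWord.head?, x.1 = 1 := by
    intro x hx
    rw [hheadeq] at hx
    exact hh x hx
  have hlendich : w₀.toWord.length = 1 ∨ 2 ≤ w₀.toWord.length := by
    have := List.length_pos_iff.mpr hne2
    omega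
  rcases hlendich with hlen1 | hlen2
  · -- w₀ is a single b-letter : give the answer
    obtain ⟨x, hx⟩ := List.length_eq_one_iff.mp hlen1
    have hx1 : x.1 = 1 := hhead2 x (by rw [hx]; rfl)
    have hxx : x = ((1 : Fin 2), x.2) := by rw [← hx1]
    have hw₀ : w₀ = 𝔟 ^ (sgn x.2) := by
      rw [zpow_sgn, ← FreeGroup.mk_toWord (x := w₀), hx, ← hxx]
    refine ⟨n, m, sgn x.2, by cases x.2 <;> simp [sgn], ?_⟩
    rw [hwu, huw, hw₀, ← mul_assoc]
  · -- w₀ has length at least 2 : contradiction with no_big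
    exfalso
    set g := FreeGroup.lift ![𝔞, w₀] with hg
    set τ := FreeGroup.lift ![𝔞, 𝔞 ^ n * 𝔟 * 𝔞 ^ m] with hτ
    have hcomp : g.comp τ = (f : F2 →* F2) := by
      apply FreeGroup.ext_hom
      intro i
      rcases fin2 i with rfl | rfl
      · simp only [MonoidHom.comp_apply, hτ, hg, FreeGroup.lift_apply_of]
        simp only [Matrix.cons_val_zero]
        rw [FreeGroup.lift_apply_of]
        simp [hf]
      · simp only [MonoidHom.comp_apply, hτ, hg, FreeGroup.lift_apply_of]
        simp only [Matrix.cons_val_one, Matrix.head_cons, Matrix.cons_val_zero]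
        rw [_root_.map_mul, _root_.map_mul, map_zpow, map_zpow, FreeGroup.lift_apply_of,
          FreeGroup.lift_apply_of]
        simp only [Matrix.cons_val_zero, Matrix.cons_val_one, Matrix.head_cons]
        rw [show ((f : F2 →* F2) (FreeGroup.of 1)) = w from rfl, hwu, huw]
        exact mul_assoc _ _ _
    have hz : g (τ (f.symm 𝔟)) = 𝔟 := by
      have h1 := congrArg (fun h : F2 →* F2 => h (f.symm 𝔟)) hcomp
      simp only [MonoidHom.comp_apply] at h1
      rw [h1]
      exact f.apply_symm_apply _
    rw [hg] at hz
    exact no_big w₀ hlen2 hhead2 hlast2 _ hz
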